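/- arXiv:2502.07090 — 2 statements merged into one kernel-verified Lean document; each statement's English description precedes it below -/
import Mathlib

section
/- Let Y be a real random variable with distribution P having a density p that is bounded below by c_l > 0 on an interval containing θ₀ and θ, where θ₀ is the α-quantile of P. Define the excess pinball risk R(θ₀, θ) = 𝔼[ℓ_α(θ, Y) − ℓ_α(θ₀, Y)]. Then R(θ₀, θ) ≥ (c_l/2)(θ − θ₀)². -/
open MeasureTheory

/-- The pinball (quantile) loss at level `α`. -/
noncomputable def pinball (α θ y : ℝ) : ℝ :=
  if θ ≤ y then α * (y - θ) else (1 - α) * (θ - y)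

lemma pinball_meas_lb (p : ℝ → ℝ) (P : Measure ℝ)
    (hdens : P = volume.withDensity (fun y => ENNReal.ofReal (p y)))
    (c_l : ℝ) (S : Set ℝ) (hlow : ∀ y ∈ S, c_l ≤ p y)
    (t : Set ℝ) (ht : MeasurableSet t) (hts : t ⊆ S) :
    ENNReal.ofReal c_l * volume t ≤ P t := by
  rw [hdens, withDensity_apply _ ht]
  calc ENNReal.ofReal c_l * volume t = ∫⁻ _ in t, ENNReal.ofReal c_l ∂volume := by
        rw [setLIntegral_const]
    _ ≤ ∫⁻ y in t, ENNReal.ofReal (p y) ∂volume := by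
        refine lintegral_mono_ae ?_
        filter_upwards [ae_restrict_mem ht] with y hy
        exact ENNReal.ofReal_le_ofReal (hlow y (hts hy))

lemma pinball_restrict_lb (p : ℝ → ℝ) (P : Measure ℝ)
    (hdens : P = volume.withDensity (fun y => ENNReal.ofReal (p y)))
    (c_l : ℝ) (S : Set ℝ) (hlow : ∀ y ∈ S, c_l ≤ p y)
    (s : Set ℝ) (hs : MeasurableSet s) (hsS : s ⊆ S) :
    (ENNReal.ofReal c_l) • volume.restrict s ≤ P.restrict s := by
  refine Measure.le_iff.2 fun t ht => ?_
  rw [Measure.smul_apply, Measure.restrict_apply ht, Measure.restrict_apply ht, smul_eq_mul]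
  exact pinball_meas_lb p P hdens c_l S hlow (t ∩ s) (ht.inter hs)
    (fun y hy => hsS hy.2)

lemma pinball_int_lb (p : ℝ → ℝ) (P : Measure ℝ)
    (hdens : P = volume.withDensity (fun y => ENNReal.ofReal (p y)))
    (c_l : ℝ) (hcl : 0 < c_l) (S : Set ℝ) (hlow : ∀ y ∈ S, c_l ≤ p y)
    (a b : ℝ) (hsub : Set.Ioc a b ⊆ S)
    (g : ℝ → ℝ) (hg : ∀ y ∈ Set.Ioc a b, 0 ≤ g y) (hgi : Integrable g P)
    (hgvol : c_l / 2 * (b - a) ^ 2 ≤ c_l * ∫ y in Set.Ioc a b, g y) :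
    c_l / 2 * (b - a) ^ 2 ≤ ∫ y in Set.Ioc a b, g y ∂P := by
  have hle := pinball_restrict_lb p P hdens c_l S hlow (Set.Ioc a b) measurableSet_Ioc hsub
  have h1 : ∫ y, g y ∂((ENNReal.ofReal c_l) • volume.restrict (Set.Ioc a b))
      ≤ ∫ y in Set.Ioc a b, g y ∂P := by
    refine integral_mono_measure hle ?_ hgi.restrict
    exact (ae_restrict_iff' measurableSet_Ioc).2 (ae_of_all _ hg)
  rw [integral_smul_measure, ENNReal.toReal_ofReal hcl.le, smul_eq_mul] at h1
  linarith

lemma pinball_vol1 (a b : ℝ) (hab : a ≤ b) :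
    ∫ y in Set.Ioc a b, (b - y) = (b - a) ^ 2 / 2 := by
  have h1 : IntervalIntegrable (fun _ : ℝ => b) volume a b := intervalIntegrable_const
  have h2 : IntervalIntegrable (fun y : ℝ => y) volume a b := _root_.intervalIntegral.intervalIntegrable_id
  rw [← _root_.intervalIntegral.integral_of_le hab,
    _root_.intervalIntegral.integral_sub h1 h2, _root_.intervalIntegral.integral_const,
    _root_.integral_id, smul_eq_mul]
  ring

lemma pinball_vol2 (a b : ℝ) (hab : a ≤ b) :
    ∫ y in Set.Ioc a b, (y - a) = (b - a) ^ 2 / 2 := by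
  have h1 : IntervalIntegrable (fun _ : ℝ => a) volume a b := intervalIntegrable_const
  have h2 : IntervalIntegrable (fun y : ℝ => y) volume a b := _root_.intervalIntegral.intervalIntegrable_id
  rw [← _root_.intervalIntegral.integral_of_le hab,
    _root_.intervalIntegral.integral_sub h2 h1, _root_.intervalIntegral.integral_const,
    _root_.integral_id, smul_eq_mul]
  ring

lemma pinball_diff_le (α θ₀ θ : ℝ) (h : θ₀ ≤ θ) (y : ℝ) :
    pinball α θ y - pinball α θ₀ y =
      -(α * (θ - θ₀)) + Set.indicator (Set.Iic θ₀) (fun _ => θ - θ₀) y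
        + Set.indicator (Set.Ioc θ₀ θ) (fun z => θ - z) y := by
  unfold pinball
  rcases le_or_gt y θ₀ with hy | hy
  · rw [Set.indicator_of_mem (Set.mem_Iic.2 hy), Set.indicator_of_notMem (by simp only [Set.mem_Ioc, not_and, not_le]; intro h1; linarith)]
    split_ifs <;> nlinarith
  · rw [Set.indicator_of_notMem (by simpa using hy.not_ge)]
    rcases le_or_gt y θ with hy2 | hy2
    · rw [Set.indicator_of_mem (Set.mem_Ioc.2 ⟨hy, hy2⟩)]
      split_ifs <;> nlinarith
    · rw [Set.indicator_of_notMem (by simp only [Set.mem_Ioc, not_and, not_le]; intro h1; linarith)]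
      split_ifs <;> nlinarith

lemma pinball_diff_ge (α θ₀ θ : ℝ) (h : θ ≤ θ₀) (y : ℝ) :
    pinball α θ y - pinball α θ₀ y =
      α * (θ₀ - θ) + Set.indicator (Set.Iic θ₀) (fun _ => -(θ₀ - θ)) y
        + Set.indicator (Set.Ioc θ θ₀) (fun z => z - θ) y := by
  unfold pinball
  rcases le_or_gt y θ with hy | hy
  · rw [Set.indicator_of_mem (Set.mem_Iic.2 (hy.trans h)),
      Set.indicator_of_notMem (by simp only [Set.mem_Ioc, not_and, not_le]; intro h1; linarith)]
    split_ifs <;> nlinarith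
  · rcases le_or_gt y θ₀ with hy2 | hy2
    · rw [Set.indicator_of_mem (Set.mem_Iic.2 hy2),
        Set.indicator_of_mem (Set.mem_Ioc.2 ⟨hy, hy2⟩)]
      split_ifs <;> nlinarith
    · rw [Set.indicator_of_notMem (by simpa using hy2.not_ge),
        Set.indicator_of_notMem (by simp only [Set.mem_Ioc, not_and, not_le]; intro h1; linarith)]
      split_ifs <;> nlinarith

/-- Quadratic lower bound on the excess pinball risk: if the distribution `P` of `Y` has a
density bounded below by `c_l` on an interval containing `θ₀` and `θ`, and `θ₀` is the
`α`-quantile of `P`, then the excess pinball risk is at least `(c_l/2)(θ - θ₀)²`. -/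
theorem stmt3 (α : ℝ) (hα : α ∈ Set.Ioo (0 : ℝ) 1)
    (p : ℝ → ℝ) (P : Measure ℝ) [IsProbabilityMeasure P]
    (hdens : P = volume.withDensity (fun y => ENNReal.ofReal (p y)))
    (θ₀ θ : ℝ)
    (c_l : ℝ) (hcl : 0 < c_l)
    (hlow : ∀ y ∈ Set.uIcc θ₀ θ, c_l ≤ p y)
    (hquant : P (Set.Iic θ₀) = ENNReal.ofReal α)
    (hint : Integrable id P) :
    (∫ y, (pinball α θ y - pinball α θ₀ y) ∂P) ≥ c_l / 2 * (θ - θ₀) ^ 2 := by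
  have hIic : (P (Set.Iic θ₀)).toReal = α := by
    rw [hquant, ENNReal.toReal_ofReal hα.1.le]
  rcases le_total θ₀ θ with h | h
  · -- θ₀ ≤ θ
    have hsub : Set.Ioc θ₀ θ ⊆ Set.uIcc θ₀ θ := by
      rw [Set.uIcc_of_le h]; exact Set.Ioc_subset_Icc_self
    have hgi : Integrable (fun z : ℝ => θ - z) P := (integrable_const θ).sub hint
    have hkey : c_l / 2 * (θ - θ₀) ^ 2 ≤ ∫ y in Set.Ioc θ₀ θ, (θ - y) ∂P := by
      refine pinball_int_lb p P hdens c_l hcl _ hlow θ₀ θ hsub _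
        (fun y hy => by simp at hy; linarith [hy.2]) hgi ?_
      rw [pinball_vol1 θ₀ θ h]; exact le_of_eq (by ring)
    have hi1 : Integrable (fun _ : ℝ => -(α * (θ - θ₀))) P := integrable_const _
    have hi2 : Integrable ((Set.Iic θ₀).indicator (fun _ => θ - θ₀)) P :=
      (integrable_const _).indicator measurableSet_Iic
    have hi3 : Integrable ((Set.Ioc θ₀ θ).indicator (fun z => θ - z)) P :=
      hgi.indicator measurableSet_Ioc
    have hi12 : Integrable (fun y : ℝ => -(α * (θ - θ₀)) + (Set.Iic θ₀).indicator (fun _ => θ - θ₀) y) P := hi1.add hi2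
    simp only [pinball_diff_le α θ₀ θ h]
    rw [integral_add hi12 hi3, integral_add hi1 hi2, integral_const,
      integral_indicator measurableSet_Iic, setIntegral_const,
      integral_indicator measurableSet_Ioc, measureReal_def P (Set.Iic θ₀), hIic]
    simp only [probReal_univ, measure_univ, ENNReal.toReal_one, one_smul, smul_eq_mul]
    linarith
  · -- θ ≤ θ₀
    have hsub : Set.Ioc θ θ₀ ⊆ Set.uIcc θ₀ θ := by
      rw [Set.uIcc_of_ge h]; exact Set.Ioc_subset_Icc_self
    have hgi : Integrable (fun z : ℝ => z - θ) P := hint.sub (integrable_const θ)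
    have hkey : c_l / 2 * (θ₀ - θ) ^ 2 ≤ ∫ y in Set.Ioc θ θ₀, (y - θ) ∂P := by
      refine pinball_int_lb p P hdens c_l hcl _ hlow θ θ₀ hsub _
        (fun y hy => by simp at hy; linarith [hy.1]) hgi ?_
      rw [pinball_vol2 θ θ₀ h]; exact le_of_eq (by ring)
    have hi1 : Integrable (fun _ : ℝ => α * (θ₀ - θ)) P := integrable_const _
    have hi2 : Integrable ((Set.Iic θ₀).indicator (fun _ => -(θ₀ - θ))) P :=
      (integrable_const _).indicator measurableSet_Iic
    have hi3 : Integrable ((Set.Ioc θ θ₀).indicator (fun z => z - θ)) P :=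
      hgi.indicator measurableSet_Ioc
    have hi12 : Integrable (fun y : ℝ => α * (θ₀ - θ) + (Set.Iic θ₀).indicator (fun _ => -(θ₀ - θ)) y) P := hi1.add hi2
    simp only [pinball_diff_ge α θ₀ θ h]
    rw [integral_add hi12 hi3, integral_add hi1 hi2, integral_const,
      integral_indicator measurableSet_Iic, setIntegral_const,
      integral_indicator measurableSet_Ioc, measureReal_def P (Set.Iic θ₀), hIic]
    simp only [probReal_univ, measure_univ, ENNReal.toReal_one, one_smul, smul_eq_mul]
    nlinarith [sq_nonneg (θ - θ₀)]
end

section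
/- Let Y be a real random variable with density bounded below by c_l > 0, let θ₀ be its α-quantile, and let θ be any real number with |θ − θ₀| bounded. Then Var(ℓ_α(θ, Y) − ℓ_α(θ₀, Y)) ≤ (2/c_l) · max(α, 1−α)² · R(θ₀, θ), where R(θ₀, θ) = 𝔼[ℓ_α(θ, Y) − ℓ_α(θ₀, Y)] is the excess pinball risk. -/
open MeasureTheory Set

/-- Variance of `h` under the measure `μ`. -/
noncomputable def varOf (μ : Measure ℝ) (h : ℝ → ℝ) : ℝ :=
  ∫ x, (h x - ∫ y, h y ∂μ) ^ 2 ∂μ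

lemma pinball_rep (α t y : ℝ) : pinball α t y = α * (y - t) + max (t - y) 0 := by
  unfold pinball
  rcases le_or_gt t y with h | h
  · rw [if_pos h, max_eq_right (by linarith)]; ring
  · rw [if_neg (not_le.mpr h), max_eq_left (by linarith)]; ring

set_option maxHeartbeats 1000000 in
/-- Variance–mean relation for the pinball loss: if the distribution of `Y` has a density
bounded below by `c_l > 0` (on the interval between `θ₀` and `θ`), `θ₀` is its `α`-quantile,
and `|θ - θ₀|` is bounded, then the variance of the excess loss is bounded by
`(2/c_l) max(α, 1-α)²` times the excess pinball risk. -/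
theorem stmt4 (α : ℝ) (hα : α ∈ Set.Ioo (0 : ℝ) 1)
    (p : ℝ → ℝ) (P : Measure ℝ) [IsProbabilityMeasure P]
    (hdens : P = volume.withDensity (fun y => ENNReal.ofReal (p y)))
    (θ₀ θ : ℝ) (B : ℝ) (hB : |θ - θ₀| ≤ B)
    (c_l : ℝ) (hcl : 0 < c_l)
    (hlow : ∀ y ∈ Set.uIcc θ₀ θ, c_l ≤ p y)
    (hquant : P (Set.Iic θ₀) = ENNReal.ofReal α)
    (hint : Integrable id P) :
    varOf P (fun y => pinball α θ y - pinball α θ₀ y) ≤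
      2 / c_l * max α (1 - α) ^ 2 * ∫ y, (pinball α θ y - pinball α θ₀ y) ∂P := by
  obtain ⟨hα0, hα1⟩ := hα
  set M := max α (1 - α) with hMdef
  have hMα : α ≤ M := le_max_left _ _
  have hMα' : 1 - α ≤ M := le_max_right _ _
  have hM0 : 0 < M := lt_of_lt_of_le hα0 hMα
  set g : ℝ → ℝ := fun y => pinball α θ y - pinball α θ₀ y with hgdef
  have hgrep : ∀ y, g y = α * (θ₀ - θ) + (max (θ - y) 0 - max (θ₀ - y) 0) := by
    intro y; simp only [hgdef, pinball_rep]; ring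
  have hgc : Continuous g := by
    have : g = fun y => α * (θ₀ - θ) + (max (θ - y) 0 - max (θ₀ - y) 0) := funext hgrep
    rw [this]; fun_prop
  -- bounds on the max-difference
  have hΔub : ∀ y, max (θ - y) 0 - max (θ₀ - y) 0 ≤ max (θ - θ₀) 0 := by
    intro y
    have h1 : θ - y ≤ max (θ₀ - y) 0 + max (θ - θ₀) 0 := by
      have a1 := le_max_left (θ₀ - y) (0:ℝ); have a2 := le_max_left (θ - θ₀) (0:ℝ); linarith
    have h2 : (0:ℝ) ≤ max (θ₀ - y) 0 + max (θ - θ₀) 0 := by positivity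
    have := max_le h1 h2; linarith
  have hΔlb : ∀ y, -max (θ₀ - θ) 0 ≤ max (θ - y) 0 - max (θ₀ - y) 0 := by
    intro y
    have h1 : θ₀ - y ≤ max (θ - y) 0 + max (θ₀ - θ) 0 := by
      have a1 := le_max_left (θ - y) (0:ℝ); have a2 := le_max_left (θ₀ - θ) (0:ℝ); linarith
    have h2 : (0:ℝ) ≤ max (θ - y) 0 + max (θ₀ - θ) 0 := by positivity
    have := max_le h1 h2; linarith
  -- pointwise Lipschitz-type bound
  have hgb : ∀ y, |g y| ≤ M * |θ - θ₀| := by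
    intro y
    rw [hgrep y, abs_le]
    have h1 := hΔub y; have h2 := hΔlb y
    rcases le_total θ₀ θ with h | h
    · rw [abs_of_nonneg (by linarith)]
      have e1 : max (θ - θ₀) 0 = θ - θ₀ := max_eq_left (by linarith)
      have e2 : max (θ₀ - θ) 0 = 0 := max_eq_right (by linarith)
      rw [e1] at h1; rw [e2] at h2
      constructor
      · nlinarith [mul_le_mul_of_nonneg_right hMα (sub_nonneg.mpr h)]
      · nlinarith [mul_le_mul_of_nonneg_right hMα' (sub_nonneg.mpr h)]
    · rw [abs_of_nonpos (by linarith)]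
      have e1 : max (θ - θ₀) 0 = 0 := max_eq_right (by linarith)
      have e2 : max (θ₀ - θ) 0 = θ₀ - θ := max_eq_left (by linarith)
      rw [e1] at h1; rw [e2] at h2
      constructor
      · nlinarith [mul_le_mul_of_nonneg_right hMα' (sub_nonneg.mpr h)]
      · nlinarith [mul_le_mul_of_nonneg_right hMα (sub_nonneg.mpr h)]
  have hgint : Integrable g P := by
    refine Integrable.mono' (integrable_const (M * |θ - θ₀|)) hgc.aestronglyMeasurable ?_
    exact ae_of_all _ fun y => by simpa [Real.norm_eq_abs] using hgb y
  have hg2int : Integrable (fun y => g y ^ 2) P := by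
    refine Integrable.mono' (integrable_const ((M * |θ - θ₀|) ^ 2))
      ((hgc.pow 2).aestronglyMeasurable) ?_
    refine ae_of_all _ fun y => ?_
    have h1 := hgb y
    have : ‖g y ^ 2‖ = |g y| ^ 2 := by rw [Real.norm_eq_abs, abs_pow, sq_abs, ← sq_abs]
    rw [this]
    exact pow_le_pow_left₀ (abs_nonneg _) h1 2
  set m := ∫ y, g y ∂P with hm
  -- variance ≤ second moment
  have hvar : varOf P g ≤ ∫ y, g y ^ 2 ∂P := by
    unfold varOf
    have hrw : (fun x => (g x - m) ^ 2) = fun x => g x ^ 2 - (2 * m) * g x + m ^ 2 := by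
      funext x; ring
    calc (∫ x, (g x - m) ^ 2 ∂P)
        = ∫ x, (g x ^ 2 - (2 * m) * g x + m ^ 2) ∂P := by rw [hrw]
      _ = (∫ x, (g x ^ 2 - (2 * m) * g x) ∂P) + ∫ _x, m ^ 2 ∂P :=
          integral_add (hg2int.sub (hgint.const_mul (2 * m))) (integrable_const _)
      _ = (∫ x, g x ^ 2 ∂P) - (2 * m) * (∫ x, g x ∂P) + m ^ 2 := by
          rw [integral_sub hg2int (hgint.const_mul (2 * m)), integral_const_mul, integral_const]
          simp
      _ = (∫ x, g x ^ 2 ∂P) - m ^ 2 := by rw [← hm]; ring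
      _ ≤ ∫ x, g x ^ 2 ∂P := by nlinarith [sq_nonneg m]
  -- second moment bound
  have h2 : ∫ y, g y ^ 2 ∂P ≤ M ^ 2 * (θ - θ₀) ^ 2 := by
    have hb : ∀ y, g y ^ 2 ≤ M ^ 2 * (θ - θ₀) ^ 2 := by
      intro y
      have h1 := hgb y
      nlinarith [abs_nonneg (g y), sq_abs (g y), sq_abs (θ - θ₀), abs_nonneg (θ - θ₀), hM0.le]
    calc ∫ y, g y ^ 2 ∂P ≤ ∫ _y, M ^ 2 * (θ - θ₀) ^ 2 ∂P :=
          integral_mono hg2int (integrable_const _) hb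
      _ = M ^ 2 * (θ - θ₀) ^ 2 := by simp
  have hq : (P (Set.Iic θ₀)).toReal = α := by rw [hquant, ENNReal.toReal_ofReal hα0.le]
  -- excess risk lower bound
  have hR : c_l / 2 * (θ - θ₀) ^ 2 ≤ m := by
    rcases le_total θ₀ θ with hc | hc
    · -- θ₀ ≤ θ
      have hsub : Ioc θ₀ θ ⊆ uIcc θ₀ θ := by rw [uIcc_of_le hc]; exact Ioc_subset_Icc_self
      have hptw : ∀ y, g y = α * (θ₀ - θ) + ((Iic θ₀).indicator (fun _ => θ - θ₀) y
          + (Ioc θ₀ θ).indicator (fun z => θ - z) y) := by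
        intro y
        rw [hgrep y]
        rcases le_or_gt y θ₀ with h | h
        · rw [indicator_of_mem (mem_Iic.mpr h),
            indicator_of_notMem (by simp only [mem_Ioc, not_and_or, not_lt]; exact Or.inl h),
            max_eq_left (by linarith), max_eq_left (by linarith)]
          ring
        · rcases le_or_gt y θ with h' | h'
          · rw [indicator_of_notMem (by simpa [mem_Iic] using h),
              indicator_of_mem (mem_Ioc.mpr ⟨h, h'⟩),
              max_eq_left (by linarith), max_eq_right (by linarith)]
            ring
          · rw [indicator_of_notMem (by simpa [mem_Iic] using h),
              indicator_of_notMem (by simp only [mem_Ioc, not_and_or, not_le]; exact Or.inr h'),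
              max_eq_right (by linarith), max_eq_right (by linarith)]
            ring
      have hi1 : Integrable ((Iic θ₀).indicator (fun _ => θ - θ₀) : ℝ → ℝ) P :=
        (integrable_const _).indicator measurableSet_Iic
      have hfi : Integrable (fun z : ℝ => θ - z) P := by
        exact (integrable_const θ).sub hint
      have hi2 : Integrable ((Ioc θ₀ θ).indicator (fun z => θ - z)) P :=
        hfi.indicator measurableSet_Ioc
      have hi12 : Integrable (fun y => (Iic θ₀).indicator (fun _ => θ - θ₀) y
          + (Ioc θ₀ θ).indicator (fun z => θ - z) y) P := hi1.add hi2
      have hInt : m = ∫ y in Ioc θ₀ θ, (θ - y) ∂P := by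
        rw [hm]
        calc (∫ y, g y ∂P)
            = ∫ y, (α * (θ₀ - θ) + ((Iic θ₀).indicator (fun _ => θ - θ₀) y
                + (Ioc θ₀ θ).indicator (fun z => θ - z) y)) ∂P := by
              exact integral_congr_ae (ae_of_all _ hptw)
          _ = (∫ _y, α * (θ₀ - θ) ∂P) + ((∫ y, (Iic θ₀).indicator (fun _ => θ - θ₀) y ∂P)
                + ∫ y, (Ioc θ₀ θ).indicator (fun z => θ - z) y ∂P) := by
              rw [integral_add (integrable_const _) hi12, integral_add hi1 hi2]
          _ = α * (θ₀ - θ) + (α * (θ - θ₀) + ∫ y in Ioc θ₀ θ, (θ - y) ∂P) := by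
              rw [integral_const, integral_indicator measurableSet_Iic,
                integral_indicator measurableSet_Ioc, setIntegral_const]
              simp [hq, show P.real (Iic θ₀) = α from hq]
          _ = ∫ y in Ioc θ₀ θ, (θ - y) ∂P := by ring
      have hle : (ENNReal.ofReal c_l) • (volume.restrict (Ioc θ₀ θ)) ≤ P.restrict (Ioc θ₀ θ) := by
        refine Measure.le_iff.mpr fun s hs => ?_
        rw [Measure.smul_apply, Measure.restrict_apply hs, Measure.restrict_apply hs,
          hdens, withDensity_apply _ (hs.inter measurableSet_Ioc)]
        rw [smul_eq_mul, ← setLIntegral_const,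
          ← lintegral_indicator (hs.inter measurableSet_Ioc),
          ← lintegral_indicator (hs.inter measurableSet_Ioc)]
        refine lintegral_mono fun y => ?_
        by_cases hy : y ∈ s ∩ Ioc θ₀ θ
        · simp only [indicator_of_mem hy]
          exact ENNReal.ofReal_le_ofReal (hlow y (hsub hy.2))
        · simp [indicator_of_notMem hy]
      have hnn : (0 : ℝ → ℝ) ≤ᵐ[P.restrict (Ioc θ₀ θ)] fun y => θ - y := by
        filter_upwards [ae_restrict_of_forall_mem measurableSet_Ioc
          (fun y (hy : y ∈ Ioc θ₀ θ) => hy.2)] with y hy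
        simpa using sub_nonneg.mpr hy
      have hmono : ∫ y, (θ - y) ∂((ENNReal.ofReal c_l) • volume.restrict (Ioc θ₀ θ))
          ≤ ∫ y in Ioc θ₀ θ, (θ - y) ∂P :=
        integral_mono_measure hle hnn hfi.restrict
      have hcomp : ∫ y, (θ - y) ∂((ENNReal.ofReal c_l) • volume.restrict (Ioc θ₀ θ))
          = c_l * ((θ - θ₀) ^ 2 / 2) := by
        rw [integral_smul_measure, ENNReal.toReal_ofReal hcl.le, smul_eq_mul]
        congr 1
        have : (∫ y in Ioc θ₀ θ, (θ - y)) = ∫ y in θ₀..θ, (θ - y) :=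
          (intervalIntegral.integral_of_le hc).symm
        rw [this, intervalIntegral.integral_sub intervalIntegrable_const
          intervalIntegral.intervalIntegrable_id]
        simp [integral_id]
        ring
      rw [hInt]; nlinarith [hmono, hcomp]
    · -- θ ≤ θ₀
      have hsub : Ioc θ θ₀ ⊆ uIcc θ₀ θ := by rw [uIcc_of_ge hc]; exact Ioc_subset_Icc_self
      have hptw : ∀ y, g y = α * (θ₀ - θ) + ((Iic θ₀).indicator (fun _ => θ - θ₀) y
          + (Ioc θ θ₀).indicator (fun z => z - θ) y) := by
        intro y
        rw [hgrep y]
        rcases le_or_gt y θ with h | h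
        · rw [indicator_of_mem (mem_Iic.mpr (by linarith)),
            indicator_of_notMem (by simp only [mem_Ioc, not_and_or, not_lt]; exact Or.inl h),
            max_eq_left (by linarith), max_eq_left (by linarith)]
          ring
        · rcases le_or_gt y θ₀ with h' | h'
          · rw [indicator_of_mem (mem_Iic.mpr h'),
              indicator_of_mem (mem_Ioc.mpr ⟨h, h'⟩),
              max_eq_right (by linarith), max_eq_left (by linarith)]
            ring
          · rw [indicator_of_notMem (by simpa [mem_Iic] using h'),
              indicator_of_notMem (by simp only [mem_Ioc, not_and_or, not_le]; exact Or.inr h'),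
              max_eq_right (by linarith), max_eq_right (by linarith)]
            ring
      have hi1 : Integrable ((Iic θ₀).indicator (fun _ => θ - θ₀) : ℝ → ℝ) P :=
        (integrable_const _).indicator measurableSet_Iic
      have hfi : Integrable (fun z : ℝ => z - θ) P := by
        exact hint.sub (integrable_const θ)
      have hi2 : Integrable ((Ioc θ θ₀).indicator (fun z => z - θ)) P :=
        hfi.indicator measurableSet_Ioc
      have hi12 : Integrable (fun y => (Iic θ₀).indicator (fun _ => θ - θ₀) y
          + (Ioc θ θ₀).indicator (fun z => z - θ) y) P := hi1.add hi2
      have hInt : m = ∫ y in Ioc θ θ₀, (y - θ) ∂P := by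
        rw [hm]
        calc (∫ y, g y ∂P)
            = ∫ y, (α * (θ₀ - θ) + ((Iic θ₀).indicator (fun _ => θ - θ₀) y
                + (Ioc θ θ₀).indicator (fun z => z - θ) y)) ∂P := by
              exact integral_congr_ae (ae_of_all _ hptw)
          _ = (∫ _y, α * (θ₀ - θ) ∂P) + ((∫ y, (Iic θ₀).indicator (fun _ => θ - θ₀) y ∂P)
                + ∫ y, (Ioc θ θ₀).indicator (fun z => z - θ) y ∂P) := by
              rw [integral_add (integrable_const _) hi12, integral_add hi1 hi2]
          _ = α * (θ₀ - θ) + (α * (θ - θ₀) + ∫ y in Ioc θ θ₀, (y - θ) ∂P) := by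
              rw [integral_const, integral_indicator measurableSet_Iic,
                integral_indicator measurableSet_Ioc, setIntegral_const]
              simp [hq, show P.real (Iic θ₀) = α from hq]
          _ = ∫ y in Ioc θ θ₀, (y - θ) ∂P := by ring
      have hle : (ENNReal.ofReal c_l) • (volume.restrict (Ioc θ θ₀)) ≤ P.restrict (Ioc θ θ₀) := by
        refine Measure.le_iff.mpr fun s hs => ?_
        rw [Measure.smul_apply, Measure.restrict_apply hs, Measure.restrict_apply hs,
          hdens, withDensity_apply _ (hs.inter measurableSet_Ioc)]
        rw [smul_eq_mul, ← setLIntegral_const,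
          ← lintegral_indicator (hs.inter measurableSet_Ioc),
          ← lintegral_indicator (hs.inter measurableSet_Ioc)]
        refine lintegral_mono fun y => ?_
        by_cases hy : y ∈ s ∩ Ioc θ θ₀
        · simp only [indicator_of_mem hy]
          exact ENNReal.ofReal_le_ofReal (hlow y (hsub hy.2))
        · simp [indicator_of_notMem hy]
      have hnn : (0 : ℝ → ℝ) ≤ᵐ[P.restrict (Ioc θ θ₀)] fun y => y - θ := by
        filter_upwards [ae_restrict_of_forall_mem measurableSet_Ioc
          (fun y (hy : y ∈ Ioc θ θ₀) => hy.1)] with y hy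
        simpa using (sub_nonneg.mpr hy.le)
      have hmono : ∫ y, (y - θ) ∂((ENNReal.ofReal c_l) • volume.restrict (Ioc θ θ₀))
          ≤ ∫ y in Ioc θ θ₀, (y - θ) ∂P :=
        integral_mono_measure hle hnn hfi.restrict
      have hcomp : ∫ y, (y - θ) ∂((ENNReal.ofReal c_l) • volume.restrict (Ioc θ θ₀))
          = c_l * ((θ - θ₀) ^ 2 / 2) := by
        rw [integral_smul_measure, ENNReal.toReal_ofReal hcl.le, smul_eq_mul]
        congr 1
        have : (∫ y in Ioc θ θ₀, (y - θ)) = ∫ y in θ..θ₀, (y - θ) :=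
          (intervalIntegral.integral_of_le hc).symm
        rw [this, intervalIntegral.integral_sub intervalIntegral.intervalIntegrable_id
          intervalIntegrable_const]
        simp [integral_id]
        ring
      rw [hInt]; nlinarith [hmono, hcomp]
  -- assemble
  have h3 : (θ - θ₀) ^ 2 ≤ 2 / c_l * m := by
    have hpos : (0:ℝ) < 2 / c_l := by positivity
    calc (θ - θ₀) ^ 2 = 2 / c_l * (c_l / 2 * (θ - θ₀) ^ 2) := by
          field_simp
      _ ≤ 2 / c_l * m := mul_le_mul_of_nonneg_left hR hpos.le
  have h4 : M ^ 2 * (θ - θ₀) ^ 2 ≤ M ^ 2 * (2 / c_l * m) :=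
    mul_le_mul_of_nonneg_left h3 (sq_nonneg M)
  calc varOf P g ≤ ∫ y, g y ^ 2 ∂P := hvar
    _ ≤ M ^ 2 * (θ - θ₀) ^ 2 := h2
    _ ≤ M ^ 2 * (2 / c_l * m) := h4
    _ = 2 / c_l * M ^ 2 * m := by ring
end
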